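/- For fixed α with 0 ≤ α < 1, as N → ∞: c₁ := (2 sin(θ₁/2) / (α₁² sin²θ₁ √N)) · (cos θ₁ + 1/(N + N^α − 1)) satisfies c₁ = (1/√2)·N^{(1−α)/2} + o(N^{(1−α)/2}), where cos θ₁ = ((N−2) + √(N² − 4N^α + 4N^{2α}/(N + N^α − 1)))/(2(N−1)), θ₁ = arccos(cos θ₁), and α₁² = cos²θ₁ + 1/(N + N^α − 1). -/

import Mathlib

open Filter Real Asymptotics

noncomputable def cosTheta1 (α N : ℝ) : ℝ :=
  ((N - 2) + Real.sqrt (N ^ 2 - 4 * N ^ α + 4 * N ^ (2 * α) / (N + N ^ α - 1)))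
    / (2 * (N - 1))

noncomputable def theta1 (α N : ℝ) : ℝ := Real.arccos (cosTheta1 α N)

noncomputable def alpha1Sq (α N : ℝ) : ℝ := (cosTheta1 α N) ^ 2 + 1 / (N + N ^ α - 1)

noncomputable def c1 (α N : ℝ) : ℝ :=
  2 * Real.sin (theta1 α N / 2) / (alpha1Sq α N * (Real.sin (theta1 α N)) ^ 2 * Real.sqrt N)
    * (cosTheta1 α N + 1 / (N + N ^ α - 1))

noncomputable def Sfun (α N : ℝ) : ℝ := N + N ^ α - 1
noncomputable def Dfun (α N : ℝ) : ℝ := N ^ 2 - 4 * N ^ α + 4 * N ^ (2 * α) / (N + N ^ α - 1)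

lemma cosTheta1_eq (α N : ℝ) : cosTheta1 α N = ((N - 2) + Real.sqrt (Dfun α N)) / (2 * (N - 1)) := rfl

lemma one_sub_cos (α : ℝ) {N : ℝ} (hN : 2 ≤ N) (hS : 0 < Sfun α N) (hD : 0 ≤ Dfun α N) :
    1 - cosTheta1 α N = 2 * N ^ α / (Sfun α N * (N + Real.sqrt (Dfun α N))) := by
  have hN0 : 0 < N := by linarith
  have hN1 : (0:ℝ) < N - 1 := by linarith
  have hs0 : 0 ≤ Real.sqrt (Dfun α N) := Real.sqrt_nonneg _
  have hsq : Real.sqrt (Dfun α N) ^ 2 = Dfun α N := Real.sq_sqrt hD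
  set s := Real.sqrt (Dfun α N) with hs
  have hA2 : N ^ (2*α) = (N^α)^2 := by rw [two_mul, Real.rpow_add hN0, sq]
  have hNs : 0 < N + s := by linarith
  have hSeq : Sfun α N = N + N ^ α - 1 := rfl
  have key : s^2 * Sfun α N = N^2 * Sfun α N - 4 * N^α * Sfun α N + 4 * (N^α)^2 := by
    rw [hsq]
    unfold Dfun
    rw [← hSeq]
    field_simp
    rw [hA2]
  rw [cosTheta1_eq, ← hs]
  field_simp
  linear_combination (-1) * key + 4 * N ^ α * hSeq

lemma tendsto_S_div (α : ℝ) (h1 : α < 1) :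
    Tendsto (fun N : ℝ => Sfun α N / N) atTop (nhds 1) := by
  have hα : α - 1 = -(1 - α) := by ring
  have ha : Tendsto (fun N : ℝ => N ^ (α-1)) atTop (nhds 0) := by
    rw [hα]; exact tendsto_rpow_neg_atTop (by linarith)
  have h : Tendsto (fun N : ℝ => 1 + N ^ (α-1) - N⁻¹) atTop (nhds (1 + 0 - 0)) :=
    (tendsto_const_nhds.add ha).sub tendsto_inv_atTop_zero
  rw [show (1:ℝ) + 0 - 0 = 1 by norm_num] at h
  refine Tendsto.congr' ?_ h
  filter_upwards [eventually_gt_atTop 0] with N hN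
  have hS : Sfun α N = N + N ^ α - 1 := rfl
  rw [hS, Real.rpow_sub hN, Real.rpow_one]
  field_simp

lemma tendsto_N_div_S (α : ℝ) (h1 : α < 1) :
    Tendsto (fun N : ℝ => N / Sfun α N) atTop (nhds 1) := by
  have := (tendsto_S_div α h1).inv₀ one_ne_zero
  simp only [inv_div, inv_one] at this
  exact this

lemma eventually_S_pos (α : ℝ) (h0 : 0 ≤ α) : ∀ᶠ N : ℝ in atTop, N ≤ Sfun α N ∧ 0 < Sfun α N := by
  filter_upwards [eventually_ge_atTop 2] with N hN
  have h1 : (1:ℝ) ≤ N ^ α := by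
    calc (1:ℝ) = N ^ (0:ℝ) := (Real.rpow_zero N).symm
    _ ≤ N ^ α := Real.rpow_le_rpow_of_exponent_le (by linarith) h0
  have hS : Sfun α N = N + N ^ α - 1 := rfl
  constructor <;> rw [hS] <;> linarith

lemma tendsto_D_div (α : ℝ) (h0 : 0 ≤ α) (h1 : α < 1) :
    Tendsto (fun N : ℝ => Dfun α N / N^2) atTop (nhds 1) := by
  have ha : Tendsto (fun N : ℝ => N ^ (α-2)) atTop (nhds 0) := by
    rw [show α - 2 = -(2 - α) by ring]; exact tendsto_rpow_neg_atTop (by linarith)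
  have hb : Tendsto (fun N : ℝ => N ^ (2*α-3)) atTop (nhds 0) := by
    rw [show 2*α - 3 = -(3 - 2*α) by ring]; exact tendsto_rpow_neg_atTop (by linarith)
  have h : Tendsto (fun N : ℝ => 1 - 4 * N ^ (α-2) + 4 * N ^ (2*α-3) * (N / Sfun α N))
      atTop (nhds (1 - 4*0 + 4*0*1)) :=
    (tendsto_const_nhds.sub (tendsto_const_nhds.mul ha)).add
      ((tendsto_const_nhds.mul hb).mul (tendsto_N_div_S α h1))
  rw [show (1:ℝ) - 4*0 + 4*0*1 = 1 by norm_num] at h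
  refine Tendsto.congr' ?_ h
  filter_upwards [eventually_ge_atTop 2, eventually_S_pos α h0] with N hN hS
  have hN0 : (0:ℝ) < N := by linarith
  have e2 : N ^ ((2:ℕ):ℝ) = N ^ (2:ℕ) := Real.rpow_natCast N 2
  have e3 : N ^ ((3:ℕ):ℝ) = N ^ (3:ℕ) := Real.rpow_natCast N 3
  have hα2 : N ^ (α-2) = N ^ α / N ^ (2:ℕ) := by
    rw [show α - 2 = α - ((2:ℕ):ℝ) by norm_num, Real.rpow_sub hN0, e2]
  have hα3 : N ^ (2*α-3) = N ^ (2*α) / N ^ (3:ℕ) := by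
    rw [show 2*α - 3 = 2*α - ((3:ℕ):ℝ) by norm_num, Real.rpow_sub hN0, e3]
  have hD : Dfun α N = N ^ 2 - 4 * N ^ α + 4 * N ^ (2 * α) / Sfun α N := rfl
  rw [hα2, hα3, hD]
  field_simp

lemma eventually_D_pos (α : ℝ) (h0 : 0 ≤ α) (h1 : α < 1) :
    ∀ᶠ N : ℝ in atTop, 0 < Dfun α N := by
  filter_upwards [eventually_gt_atTop 0,
    (tendsto_D_div α h0 h1).eventually (eventually_gt_nhds (by norm_num : (1:ℝ)/2 < 1))]
    with N hN hq
  have hN2 : (0:ℝ) < N^2 := by positivity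
  have h2 : 0 < Dfun α N / N^2 := by linarith
  have h3 := mul_pos h2 hN2
  rwa [div_mul_cancel₀ _ (ne_of_gt hN2)] at h3

lemma tendsto_sqrtD_div (α : ℝ) (h0 : 0 ≤ α) (h1 : α < 1) :
    Tendsto (fun N : ℝ => Real.sqrt (Dfun α N) / N) atTop (nhds 1) := by
  have h : Tendsto (fun N : ℝ => Real.sqrt (Dfun α N / N^2)) atTop (nhds 1) := by
    have := (Real.continuous_sqrt.tendsto 1).comp (tendsto_D_div α h0 h1)
    rw [Real.sqrt_one] at this
    exact this
  refine Tendsto.congr' ?_ h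
  filter_upwards [eventually_gt_atTop 0, eventually_D_pos α h0 h1] with N hN hD
  rw [Real.sqrt_div hD.le, Real.sqrt_sq hN.le]

lemma tendsto_u (α : ℝ) (h0 : 0 ≤ α) (h1 : α < 1) :
    Tendsto (fun N : ℝ => (1 - cosTheta1 α N) * N ^ ((2:ℝ)-α)) atTop (nhds 1) := by
  have h : Tendsto (fun N : ℝ => 2 / ((Sfun α N / N) * (1 + Real.sqrt (Dfun α N) / N)))
      atTop (nhds (2 / (1 * (1+1)))) := by
    refine tendsto_const_nhds.div
      ((tendsto_S_div α h1).mul (tendsto_const_nhds.add (tendsto_sqrtD_div α h0 h1))) (by norm_num)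
  rw [show (2:ℝ) / (1 * (1+1)) = 1 by norm_num] at h
  refine Tendsto.congr' ?_ h
  filter_upwards [eventually_ge_atTop 2, eventually_S_pos α h0, eventually_D_pos α h0 h1]
    with N hN hS hD
  have hN0 : (0:ℝ) < N := by linarith
  have hs0 : 0 ≤ Real.sqrt (Dfun α N) := Real.sqrt_nonneg _
  rw [one_sub_cos α hN hS.2 hD.le]
  have hpow : N ^ α * N ^ ((2:ℝ) - α) = N ^ 2 := by
    rw [← Real.rpow_add hN0, show α + ((2:ℝ) - α) = ((2:ℕ):ℝ) by norm_num, Real.rpow_natCast]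
  have hNs : (0:ℝ) < N + Real.sqrt (Dfun α N) := by linarith
  have hden : N * Sfun α N + Sfun α N * Real.sqrt (Dfun α N) ≠ 0 := by
    have he : N * Sfun α N + Sfun α N * Real.sqrt (Dfun α N)
        = Sfun α N * (N + Real.sqrt (Dfun α N)) := by ring
    rw [he]; exact (mul_pos hS.2 hNs).ne'
  field_simp [hden]
  rw [hpow]


lemma tendsto_cos (α : ℝ) (h0 : 0 ≤ α) (h1 : α < 1) :
    Tendsto (fun N : ℝ => cosTheta1 α N) atTop (nhds 1) := by
  have ha : Tendsto (fun N : ℝ => N ^ (α-2)) atTop (nhds 0) := by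
    rw [show α - 2 = -(2 - α) by ring]; exact tendsto_rpow_neg_atTop (by linarith)
  have h : Tendsto (fun N : ℝ =>
      1 - ((1 - cosTheta1 α N) * N ^ ((2:ℝ)-α)) * N ^ (α-2)) atTop (nhds (1 - 1*0)) :=
    tendsto_const_nhds.sub ((tendsto_u α h0 h1).mul ha)
  rw [show (1:ℝ) - 1*0 = 1 by norm_num] at h
  refine Tendsto.congr' ?_ h
  filter_upwards [eventually_gt_atTop 0] with N hN
  rw [mul_assoc, ← Real.rpow_add hN, show (2:ℝ) - α + (α - 2) = 0 by ring, Real.rpow_zero,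
    mul_one]
  ring

lemma tendsto_eps (α : ℝ) (h0 : 0 ≤ α) (h1 : α < 1) :
    Tendsto (fun N : ℝ => 1 / Sfun α N) atTop (nhds 0) := by
  have h : Tendsto (fun N : ℝ => N⁻¹ * (N / Sfun α N)) atTop (nhds (0 * 1)) :=
    (tendsto_inv_atTop_zero).mul (tendsto_N_div_S α h1)
  rw [show (0:ℝ) * 1 = 0 by norm_num] at h
  refine Tendsto.congr' ?_ h
  filter_upwards [eventually_gt_atTop 0, eventually_S_pos α h0] with N hN hS
  field_simp

lemma c1_eq (α : ℝ) {N : ℝ} (hN : 2 ≤ N) (hS : 0 < Sfun α N)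
    (hc0 : 0 < cosTheta1 α N) (hc1 : cosTheta1 α N < 1) :
    c1 α N = (Real.sqrt 2 * (cosTheta1 α N + 1 / Sfun α N)
        / ((cosTheta1 α N ^ 2 + 1 / Sfun α N) * (1 + cosTheta1 α N)
          * Real.sqrt ((1 - cosTheta1 α N) * N ^ ((2:ℝ)-α)))) * N ^ ((1-α)/2) := by
  have hN0 : (0:ℝ) < N := by linarith
  set c := cosTheta1 α N with hcdef
  have h1c : 0 < 1 - c := by linarith
  have hcosθ : Real.cos (theta1 α N) = c := Real.cos_arccos (by linarith) hc1.le
  have hsin : Real.sin (theta1 α N) = Real.sqrt (1 - c^2) := Real.sin_arccos _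
  have hhalf : Real.sin (theta1 α N / 2) = Real.sqrt ((1 - c)/2) := by
    rw [show theta1 α N = Real.arccos c from rfl] at *
    rw [Real.sin_half_eq_sqrt (Real.arccos_nonneg _)
      (le_trans (Real.arccos_le_pi _) (by linarith [Real.pi_pos] : π ≤ 2*π)), hcosθ]
  have hc2 : 0 ≤ 1 - c^2 := by nlinarith
  have hsin2 : (Real.sin (theta1 α N))^2 = 1 - c^2 := by rw [hsin]; exact Real.sq_sqrt hc2
  have hAeq : alpha1Sq α N = c^2 + 1 / Sfun α N := rfl
  have hceq : cosTheta1 α N + 1 / (N + N ^ α - 1) = c + 1 / Sfun α N := rfl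
  rw [c1, hhalf, hsin2, hAeq, hceq]
  -- sqrt manipulations
  have h2 : Real.sqrt ((1-c)/2) = Real.sqrt (1-c) / Real.sqrt 2 := Real.sqrt_div h1c.le 2
  have h3' : Real.sqrt (N^((2:ℝ)-α)) = N^(((2:ℝ)-α)/2) := by
    rw [Real.sqrt_eq_rpow, ← Real.rpow_mul hN0.le,
      show ((2:ℝ)-α) * (1/2) = ((2:ℝ)-α)/2 by ring]
  have h3 : Real.sqrt ((1-c) * N^((2:ℝ)-α)) = Real.sqrt (1-c) * N^(((2:ℝ)-α)/2) := by
    rw [Real.sqrt_mul h1c.le, h3']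
  have hsqN : Real.sqrt N = N ^ ((1:ℝ)/2) := Real.sqrt_eq_rpow N
  have hNx : N ^ ((1:ℝ)/2) * N ^ ((1-α)/2) = N ^ (((2:ℝ)-α)/2) := by
    rw [← Real.rpow_add hN0, show (1:ℝ)/2 + (1-α)/2 = ((2:ℝ)-α)/2 by ring]
  rw [h2, h3, hsqN]
  set q := Real.sqrt (1-c) with hqdef
  have hq : 0 < q := Real.sqrt_pos.mpr h1c
  have hq2 : q^2 = 1 - c := Real.sq_sqrt h1c.le
  set w := Real.sqrt 2 with hwdef
  have hw : 0 < w := Real.sqrt_pos.mpr (by norm_num)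
  have hw2 : w^2 = 2 := Real.sq_sqrt (by norm_num)
  set p := N ^ (((2:ℝ)-α)/2) with hpdef
  have hp : 0 < p := Real.rpow_pos_of_pos hN0 _
  have hh : 0 < N ^ ((1:ℝ)/2) := Real.rpow_pos_of_pos hN0 _
  have hh2 : 0 < N ^ ((1-α)/2) := Real.rpow_pos_of_pos hN0 _
  have hA : 0 < c^2 + 1 / Sfun α N := by positivity
  have h1pc : 0 < 1 + c := by linarith
  have h5 : 1 - c^2 = q^2 * (1+c) := by rw [hq2]; ring
  rw [h5]
  field_simp
  set S := Sfun α N with hSdef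
  set T := q^2*S*c + q^2*S + q^2*S^2*c + 2*q^2*S^2*c^2 + q^2*S^2*c^3 + q^2*S^3*c^3 + q^2*S^3*c^4
    with hTdef
  rw [hw2, mul_assoc, hNx]

theorem c1_asymptotics (α : ℝ) (h0 : 0 ≤ α) (h1 : α < 1) :
    (fun N : ℝ => c1 α N - (1 / Real.sqrt 2) * N ^ ((1 - α) / 2))
      =o[atTop] fun N : ℝ => N ^ ((1 - α) / 2) := by
  set g : ℝ → ℝ := fun N => N ^ ((1-α)/2) with hg
  set r : ℝ → ℝ := fun N => Real.sqrt 2 * (cosTheta1 α N + 1 / Sfun α N)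
      / ((cosTheta1 α N ^ 2 + 1 / Sfun α N) * (1 + cosTheta1 α N)
        * Real.sqrt ((1 - cosTheta1 α N) * N ^ ((2:ℝ)-α))) with hr
  have hrlim : Tendsto r atTop (nhds (1 / Real.sqrt 2)) := by
    have hnum : Tendsto (fun N : ℝ => Real.sqrt 2 * (cosTheta1 α N + 1 / Sfun α N))
        atTop (nhds (Real.sqrt 2 * (1 + 0))) :=
      tendsto_const_nhds.mul ((tendsto_cos α h0 h1).add (tendsto_eps α h0 h1))
    have hden : Tendsto (fun N : ℝ => (cosTheta1 α N ^ 2 + 1 / Sfun α N)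
        * (1 + cosTheta1 α N) * Real.sqrt ((1 - cosTheta1 α N) * N ^ ((2:ℝ)-α)))
        atTop (nhds ((1^2 + 0) * (1 + 1) * Real.sqrt 1)) := by
      exact ((((tendsto_cos α h0 h1).pow 2).add (tendsto_eps α h0 h1)).mul
        (tendsto_const_nhds.add (tendsto_cos α h0 h1))).mul
        ((Real.continuous_sqrt.tendsto 1).comp (tendsto_u α h0 h1))
    have hq := hnum.div hden (by norm_num [Real.sqrt_one])
    have hval : Real.sqrt 2 * (1 + 0) / ((1^2 + 0) * (1 + 1) * Real.sqrt 1)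
        = 1 / Real.sqrt 2 := by
      rw [Real.sqrt_one]
      rw [div_eq_div_iff (by norm_num) (Real.sqrt_pos.mpr (by norm_num)).ne']
      rw [mul_one, one_mul]
      nlinarith [Real.mul_self_sqrt (by norm_num : (0:ℝ) ≤ 2)]
    rwa [hval] at hq
  have hev : ∀ᶠ N in atTop, c1 α N = r N * g N := by
    filter_upwards [eventually_ge_atTop 2, eventually_S_pos α h0,
      (tendsto_cos α h0 h1).eventually (eventually_gt_nhds (by norm_num : (1:ℝ)/2 < 1)),
      (tendsto_u α h0 h1).eventually (eventually_gt_nhds (by norm_num : (0:ℝ) < 1))]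
      with N hN hS hc hu
    have hpow : 0 < N ^ ((2:ℝ)-α) := Real.rpow_pos_of_pos (by linarith) _
    have hc1lt : cosTheta1 α N < 1 := by nlinarith [hu, hpow]
    exact c1_eq α hN hS.2 (by linarith) hc1lt
  have hsmall : (fun N => r N - 1 / Real.sqrt 2) =o[atTop] (fun _ : ℝ => (1:ℝ)) := by
    rw [isLittleO_one_iff]
    simpa using hrlim.sub_const (1 / Real.sqrt 2)
  have hmain := hsmall.mul_isBigO (isBigO_refl g atTop)
  simp only [one_mul] at hmain
  refine hmain.congr' ?_ (EventuallyEq.refl _ _)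
  filter_upwards [hev] with N hN
  rw [hN]; ring
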